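/- (Smoothness step of the Proposition) Let E be a real inner product space that is a complete normed space, W a nonempty finite type, r : W → ℝ with r w > 0 for all w, and p : E → W → ℝ such that for each θ ∈ E, p θ is a probability mass function on W with p θ w > 0 for all w. Define f : E → ℝ by f θ = Real.log (∑_{w} r w * p θ w), and define ELBO_r(θ, q) = ∑_{w} q w * Real.log (r w * p θ w / q w) and q*_θ w = r w * p θ w / (∑_{v} r v * p θ v). Assume f is differentiable on E and its gradient ∇f is Lipschitz with constant L ≥ 0. Let θ*, θ̂ ∈ E satisfy ⟪∇f(θ̂), θ* − θ̂⟫ ≤ 0. Then for every probability mass function q on W with q w > 0 for all w, f(θ*) ≤ ELBO_r(θ̂, q) + ∑_{w} q w * Real.log (q w / q*_{θ̂} w) + (L / 2) * ‖θ* − θ̂‖². -/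

import Mathlib

open BigOperators

open intervalIntegral

theorem descent_lemma {E : Type*} [NormedAddCommGroup E]
    [InnerProductSpace ℝ E] [CompleteSpace E]
    (f : E → ℝ) (L : NNReal) (hdiff : Differentiable ℝ f)
    (hlip : LipschitzWith L (gradient f)) (x y : E) :
    f y ≤ f x + @inner ℝ _ _ (gradient f x) (y - x) + (L : ℝ) / 2 * ‖y - x‖ ^ 2 := by
  set d := y - x with hd
  set g : ℝ → ℝ := fun t => f (x + t • d) with hg
  have hline : ∀ t : ℝ, HasDerivAt (fun s : ℝ => x + s • d) d t := fun t => by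
    simpa using ((hasDerivAt_id t).smul_const d).const_add x
  have hgderiv : ∀ t : ℝ, HasDerivAt g (@inner ℝ _ _ (gradient f (x + t • d)) d) t := by
    intro t
    have h1 : HasGradientAt f (gradient f (x + t • d)) (x + t • d) :=
      (hdiff (x + t • d)).hasGradientAt
    have h2 : HasFDerivAt f (InnerProductSpace.toDual ℝ E (gradient f (x + t • d)))
        (x + t • d) := h1
    have := h2.comp_hasDerivAt t (hline t)
    simpa [hg, Function.comp_def] using this
  have hcont : Continuous fun t : ℝ => @inner ℝ _ _ (gradient f (x + t • d)) d :=
    (hlip.continuous.comp (continuous_const.add (continuous_id.smul continuous_const))).inner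
      continuous_const
  have hFTC : f y - f x = ∫ t in (0:ℝ)..1, @inner ℝ _ _ (gradient f (x + t • d)) d := by
    have := intervalIntegral.integral_eq_sub_of_hasDerivAt (f := g)
      (f' := fun t => @inner ℝ _ _ (gradient f (x + t • d)) d)
      (fun t _ => hgderiv t) (hcont.intervalIntegrable 0 1)
    rw [this]
    simp [hg, hd]
  have hbound : ∀ t ∈ Set.Icc (0:ℝ) 1,
      @inner ℝ _ _ (gradient f (x + t • d)) d ≤
        @inner ℝ _ _ (gradient f x) d + (L : ℝ) * t * ‖d‖ ^ 2 := by
    intro t ht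
    have h1 : @inner ℝ _ _ (gradient f (x + t • d)) d
        = @inner ℝ _ _ (gradient f x) d
          + @inner ℝ _ _ (gradient f (x + t • d) - gradient f x) d := by
      rw [inner_sub_left]; ring
    rw [h1]
    gcongr
    calc @inner ℝ _ _ (gradient f (x + t • d) - gradient f x) d
        ≤ ‖gradient f (x + t • d) - gradient f x‖ * ‖d‖ := real_inner_le_norm _ _
      _ ≤ ((L : ℝ) * ‖x + t • d - x‖) * ‖d‖ := by
          gcongr
          exact hlip.norm_sub_le _ _
      _ = (L : ℝ) * t * ‖d‖ ^ 2 := by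
          rw [add_sub_cancel_left, norm_smul, Real.norm_eq_abs, abs_of_nonneg ht.1]
          ring
  have hint : (∫ t in (0:ℝ)..1, @inner ℝ _ _ (gradient f (x + t • d)) d)
      ≤ ∫ t in (0:ℝ)..1, (@inner ℝ _ _ (gradient f x) d + (L : ℝ) * t * ‖d‖ ^ 2) := by
    apply intervalIntegral.integral_mono_on (by norm_num)
      (hcont.intervalIntegrable 0 1)
      ((by continuity : Continuous fun t : ℝ => @inner ℝ _ _ (gradient f x) d
        + (L : ℝ) * t * ‖d‖ ^ 2).intervalIntegrable 0 1)
    exact hbound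
  have hval : (∫ t in (0:ℝ)..1, (@inner ℝ _ _ (gradient f x) d + (L : ℝ) * t * ‖d‖ ^ 2))
      = @inner ℝ _ _ (gradient f x) d + (L : ℝ) / 2 * ‖d‖ ^ 2 := by
    have h2int : IntervalIntegrable (fun t : ℝ => (L : ℝ) * t * ‖d‖ ^ 2)
        MeasureTheory.volume 0 1 :=
      (by continuity : Continuous fun t : ℝ => (L : ℝ) * t * ‖d‖ ^ 2).intervalIntegrable 0 1
    rw [intervalIntegral.integral_add intervalIntegrable_const h2int]
    simp only [intervalIntegral.integral_const, smul_eq_mul]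
    have : (∫ t in (0:ℝ)..1, (L : ℝ) * t * ‖d‖ ^ 2)
        = (L : ℝ) * ‖d‖ ^ 2 * ∫ t in (0:ℝ)..1, t := by
      rw [← intervalIntegral.integral_const_mul]
      congr 1; funext t; ring
    rw [this, integral_id]
    ring
  linarith [hFTC, hint.trans_eq hval]


/-- Smoothness step: combining the descent lemma for an L-Lipschitz gradient
with the gap identity, a first-order stationarity-type inequality at θ̂
bounds the log expected reward at θ* by the reward-weighted ELBO at θ̂ plus
the KL divergence plus a quadratic term. -/
theorem smoothness_step {E : Type*} [NormedAddCommGroup E]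
    [InnerProductSpace ℝ E] [CompleteSpace E]
    {W : Type*} [Fintype W] [Nonempty W]
    (r : W → ℝ) (hr : ∀ w, 0 < r w)
    (p : E → W → ℝ) (hp : ∀ θ w, 0 < p θ w) (hpsum : ∀ θ, ∑ w, p θ w = 1)
    (f : E → ℝ) (hf : f = fun θ => Real.log (∑ w, r w * p θ w))
    (L : NNReal) (hdiff : Differentiable ℝ f)
    (hlip : LipschitzWith L (gradient f))
    (θs θh : E)
    (hinner : @inner ℝ _ _ (gradient f θh) (θs - θh) ≤ 0)
    (q : W → ℝ) (hq : ∀ w, 0 < q w) (hqsum : ∑ w, q w = 1) :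
    f θs ≤ (∑ w, q w * Real.log (r w * p θh w / q w)) +
        (∑ w, q w * Real.log (q w / (r w * p θh w / ∑ v, r v * p θh v))) +
        (L : ℝ) / 2 * ‖θs - θh‖ ^ 2 := by
  have hS : 0 < ∑ v, r v * p θh v :=
    Finset.sum_pos (fun v _ => mul_pos (hr v) (hp θh v)) Finset.univ_nonempty
  set S := ∑ v, r v * p θh v with hSdef
  have hgap : (∑ w, q w * Real.log (r w * p θh w / q w)) +
      (∑ w, q w * Real.log (q w / (r w * p θh w / S))) = f θh := by
    rw [← Finset.sum_add_distrib]
    have : ∀ w : W, q w * Real.log (r w * p θh w / q w)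
        + q w * Real.log (q w / (r w * p θh w / S)) = q w * Real.log S := by
      intro w
      have hrp : 0 < r w * p θh w := mul_pos (hr w) (hp θh w)
      rw [← mul_add, Real.log_div hrp.ne' (hq w).ne',
        Real.log_div (hq w).ne' (div_pos hrp hS).ne',
        Real.log_div hrp.ne' hS.ne']
      ring
    rw [Finset.sum_congr rfl (fun w _ => this w), ← Finset.sum_mul, hqsum, one_mul, hf]
  have hdl := descent_lemma f L hdiff hlip θh θs
  rw [hgap]
  nlinarith [hdl, hinner]
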